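/- arXiv:2012.14858 — 2 statements merged into one kernel-verified Lean document; each statement's English description precedes it below -/
import Mathlib

section
/- Let V be a finite-dimensional complex inner product space, β a self-adjoint endomorphism of V with largest eigenvalue λ₁ and eigenspace W = ker(β − λ₁). If g is an invertible endomorphism of V such that lim_{t → −∞} exp(tβ) g exp(−tβ) = id_V, then g w = w for every w ∈ W; in particular g acts as the identity on ℙ(W). -/
lemma exp_apply_eigen {V : Type*} [NormedAddCommGroup V] [InnerProductSpace ℂ V]
    [CompleteSpace V] (A : V →L[ℂ] V) (c : ℂ) (v : V) (hv : A v = c • v) :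
    NormedSpace.exp A v = Complex.exp c • v := by
  have hpow : ∀ n : ℕ, (A ^ n) v = c ^ n • v := by
    intro n
    induction n with
    | zero => simp
    | succ n ih =>
      rw [pow_succ, ContinuousLinearMap.mul_apply, hv, map_smul, ih, smul_smul, ← pow_succ']
  have hsum : Summable fun n : ℕ => ((n.factorial : ℝ))⁻¹ • A ^ n :=
    NormedSpace.expSeries_summable' A
  have happ : NormedSpace.exp A v = ∑' n : ℕ, (((n.factorial : ℝ))⁻¹ • A ^ n) v := by
    rw [NormedSpace.exp_eq_tsum (𝕂 := ℝ)]
    exact ((ContinuousLinearMap.apply ℂ V v).map_tsum hsum)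
  rw [happ]
  have h1 : ∀ n : ℕ, (((n.factorial : ℝ))⁻¹ • A ^ n) v = (((n.factorial : ℂ))⁻¹ * c ^ n) • v := by
    intro n
    rw [ContinuousLinearMap.smul_apply, hpow, ← Complex.coe_smul, smul_smul]
    norm_num
  simp_rw [h1]
  rw [Summable.tsum_smul_const (?_ : Summable fun n : ℕ => ((n.factorial : ℂ))⁻¹ * c ^ n)]
  · congr 1
    rw [Complex.exp_eq_exp_ℂ, NormedSpace.exp_eq_tsum (𝕂 := ℂ)]
    simp [smul_eq_mul]
  · exact (NormedSpace.expSeries_summable' (𝕂 := ℂ) c).congr (by simp [smul_eq_mul])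

/-- Let `β` be a self-adjoint endomorphism of a finite-dimensional complex
inner product space `V` with largest eigenvalue `λ₁` and eigenspace `W = ker (β - λ₁)`.
If `g` is an invertible endomorphism of `V` with `lim_{t → −∞} exp(tβ) g exp(−tβ) = id_V`,
then `g w = w` for every `w ∈ W`; in particular `g` acts as the identity on `ℙ(W)`. -/
theorem stmt_14 {V : Type*} [NormedAddCommGroup V] [InnerProductSpace ℂ V]
    [FiniteDimensional ℂ V] (β : V →L[ℂ] V) (hβ : IsSelfAdjoint β) (lam₁ : ℝ)
    (hlam : IsGreatest {μ : ℝ |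
      Module.End.HasEigenvalue ((β : V →ₗ[ℂ] V) : Module.End ℂ V) (μ : ℂ)} lam₁)
    (g : (V →L[ℂ] V)ˣ)
    (hg : Filter.Tendsto
      (fun t : ℝ =>
        NormedSpace.exp (t • β) * (g : V →L[ℂ] V) * NormedSpace.exp (-(t • β)))
      Filter.atBot (nhds (1 : V →L[ℂ] V))) :
    ∀ w ∈ Module.End.eigenspace ((β : V →ₗ[ℂ] V) : Module.End ℂ V) (lam₁ : ℂ),
      (g : V →L[ℂ] V) w = w := by
  intro w hw
  set u := (g : V →L[ℂ] V) w with hu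
  have hsymm : (β : V →ₗ[ℂ] V).IsSymmetric :=
    ContinuousLinearMap.isSelfAdjoint_iff_isSymmetric.mp hβ
  have hβw : β w = (lam₁ : ℂ) • w := Module.End.mem_eigenspace_iff.mp hw
  -- exp(-(t•β)) w = exp(-(t*lam₁)) • w
  have hexp_w : ∀ t : ℝ, NormedSpace.exp (-(t • β)) w = Complex.exp (-(t * lam₁) : ℝ) • w := by
    intro t
    apply exp_apply_eigen
    simp only [ContinuousLinearMap.neg_apply, ContinuousLinearMap.smul_apply, hβw]
    rw [← Complex.coe_smul, smul_smul, ← neg_smul]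
    norm_cast
  -- F t w → w
  have hFw : Filter.Tendsto (fun t : ℝ =>
      Complex.exp (-(t * lam₁) : ℝ) • NormedSpace.exp (t • β) u)
      Filter.atBot (nhds w) := by
    have h : Filter.Tendsto (fun t : ℝ =>
        (NormedSpace.exp (t • β) * (g : V →L[ℂ] V) * NormedSpace.exp (-(t • β))) w)
        Filter.atBot (nhds ((1 : V →L[ℂ] V) w)) :=
      ((ContinuousLinearMap.apply ℂ V w).continuous.tendsto _).comp hg
    rw [ContinuousLinearMap.one_apply] at h
    refine Filter.Tendsto.congr (fun t => ?_) h
    rw [ContinuousLinearMap.mul_apply, ContinuousLinearMap.mul_apply, hexp_w, map_smul, map_smul]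
  -- key claim: for every eigenvector v (any complex eigenvalue), ⟪v, u⟫ = ⟪v, w⟫
  have key : ∀ (μ : ℂ), ∀ v ∈ Module.End.eigenspace ((β : V →ₗ[ℂ] V) : Module.End ℂ V) μ,
      inner ℂ v (u - w) = (0 : ℂ) := by
    intro μ v hv
    rcases eq_or_ne v 0 with rfl | hv0
    · simp
    have hev : Module.End.HasEigenvalue ((β : V →ₗ[ℂ] V) : Module.End ℂ V) μ :=
      Module.End.hasEigenvalue_of_hasEigenvector ⟨hv, hv0⟩
    have hμreal : (starRingEnd ℂ) μ = μ := hsymm.conj_eigenvalue_eq_self hev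
    have hμ : ((μ.re : ℝ) : ℂ) = μ := Complex.conj_eq_iff_re.mp hμreal
    set μr : ℝ := μ.re with hμr
    have hμle : μr ≤ lam₁ := hlam.2 (by rw [Set.mem_setOf_eq, hμ]; exact hev)
    have hβv : β v = (μr : ℂ) • v := by
      rw [hμ]; exact Module.End.mem_eigenspace_iff.mp hv
    have hexp_v : ∀ t : ℝ, NormedSpace.exp (t • β) v = Complex.exp ((t * μr : ℝ) : ℂ) • v := by
      intro t
      apply exp_apply_eigen
      rw [ContinuousLinearMap.smul_apply, hβv, ← Complex.coe_smul, smul_smul]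
      norm_cast
    have hsa : ∀ t : ℝ, IsSelfAdjoint (NormedSpace.exp (t • β)) := fun t =>
      (IsSelfAdjoint.smul (star_trivial t) hβ).exp
    have hinner : ∀ t : ℝ,
        (inner ℂ v (Complex.exp (-(t * lam₁) : ℝ) • NormedSpace.exp (t • β) u) : ℂ)
          = ((Real.exp (t * (μr - lam₁)) : ℝ) : ℂ) * inner ℂ v u := by
      intro t
      rw [inner_smul_right]
      have hsy : ((NormedSpace.exp (t • β) : V →L[ℂ] V) : V →ₗ[ℂ] V).IsSymmetric :=
        ContinuousLinearMap.isSelfAdjoint_iff_isSymmetric.mp (hsa t)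
      have : (inner ℂ v (NormedSpace.exp (t • β) u) : ℂ)
          = inner ℂ (NormedSpace.exp (t • β) v) u := (hsy _ _).symm
      rw [this, hexp_v, inner_smul_left, ← Complex.exp_conj, Complex.conj_ofReal]
      rw [← Complex.ofReal_exp, ← Complex.ofReal_exp, ← mul_assoc, ← Complex.ofReal_mul,
        ← Real.exp_add]
      ring_nf
    have hlim : Filter.Tendsto
        (fun t : ℝ => ((Real.exp (t * (μr - lam₁)) : ℝ) : ℂ) * inner ℂ v u)
        Filter.atBot (nhds (inner ℂ v w)) := by
      have h2 := ((innerSL ℂ v).continuous.tendsto w).comp hFw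
      simp only [Function.comp_def, innerSL_apply_apply] at h2
      exact (h2.congr fun t => hinner t)
    rcases lt_or_eq_of_le hμle with hlt | heq
    · have hc : μr - lam₁ < 0 := by linarith
      have hvu : (inner ℂ v u : ℂ) = 0 := by
        by_contra h0
        have hmono : Filter.Tendsto (fun t : ℝ => t * (μr - lam₁)) Filter.atBot Filter.atTop := by
          have := (Filter.tendsto_neg_atBot_atTop (G := ℝ)).atTop_mul_const (by linarith : 0 < lam₁ - μr)
          exact this.congr fun t => by ring
        have hexp : Filter.Tendsto (fun t : ℝ => Real.exp (t * (μr - lam₁)))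
            Filter.atBot Filter.atTop := Real.tendsto_exp_atTop.comp hmono
        have hnt : Filter.Tendsto
            (fun t : ℝ => ‖((Real.exp (t * (μr - lam₁)) : ℝ) : ℂ) * inner ℂ v u‖)
            Filter.atBot Filter.atTop := by
          have := hexp.atTop_mul_const (norm_pos_iff.mpr h0)
          refine this.congr fun t => ?_
          rw [norm_mul, Complex.norm_real, Real.norm_eq_abs,
            abs_of_pos (Real.exp_pos _)]
        exact not_tendsto_atTop_of_tendsto_nhds hlim.norm hnt
      have hvw : (inner ℂ v w : ℂ) = 0 := by
        refine tendsto_nhds_unique hlim ?_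
        simp [hvu]
      rw [inner_sub_right, hvu, hvw, sub_zero]
    · have heq' : μr - lam₁ = 0 := by rw [heq]; ring
      have hconst : Filter.Tendsto
          (fun t : ℝ => ((Real.exp (t * (μr - lam₁)) : ℝ) : ℂ) * inner ℂ v u)
          Filter.atBot (nhds (inner ℂ v u)) := by
        simp only [heq', mul_zero, Real.exp_zero, Complex.ofReal_one, one_mul]
        exact tendsto_const_nhds
      have : (inner ℂ v w : ℂ) = inner ℂ v u := tendsto_nhds_unique hlim hconst
      rw [inner_sub_right, ← this, sub_self]
  -- conclude
  have horth : u - w ∈ (⨆ μ : ℂ,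
      Module.End.eigenspace ((β : V →ₗ[ℂ] V) : Module.End ℂ V) μ)ᗮ := by
    rw [← Submodule.iInf_orthogonal]
    rw [Submodule.mem_iInf]
    intro μ
    rw [Submodule.mem_orthogonal]
    exact fun v hv => key μ v hv
  rw [hsymm.orthogonalComplement_iSup_eigenspaces_eq_bot, Submodule.mem_bot,
    sub_eq_zero] at horth
  exact horth
end

section
/- Let V be a finite-dimensional complex inner product space and β a self-adjoint endomorphism of V. A point [v] ∈ ℙ(V) satisfies [exp(tβ)v] = [v] for all t ∈ ℝ if and only if v is an eigenvector of β. Consequently, the fixed-point set of the flow ([v], t) ↦ [exp(tβ)v] on ℙ(V) is the finite union ℙ(V₁) ∪ ⋯ ∪ ℙ(V_k) of the projectivized eigenspaces V₁, …, V_k of β. -/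
open scoped LinearAlgebra.Projectivization

noncomputable instance stmt17.instTop (V : Type*) [NormedAddCommGroup V]
    [InnerProductSpace ℂ V] : TopologicalSpace (ℙ ℂ V) :=
  instTopologicalSpaceQuotient

lemma stmt17.exp_apply_ne_zero {V : Type*} [NormedAddCommGroup V] [InnerProductSpace ℂ V]
    [FiniteDimensional ℂ V] (A : V →L[ℂ] V) (v : V) (hv : v ≠ 0) :
    NormedSpace.exp A v ≠ 0 := by
  intro h
  letI : NormedAlgebra ℚ (V →L[ℂ] V) := NormedAlgebra.restrictScalars ℚ ℂ (V →L[ℂ] V)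
  have h1 : NormedSpace.exp (-A) * NormedSpace.exp A = 1 := by
    rw [← NormedSpace.exp_add_of_commute (Commute.neg_left (Commute.refl A)),
      neg_add_cancel, NormedSpace.exp_zero]
  have h2 : NormedSpace.exp (-A) (NormedSpace.exp A v) = v := by
    have := congrArg (fun f : V →L[ℂ] V => f v) h1
    simpa using this
  rw [h] at h2
  simp at h2
  exact hv h2.symm

lemma stmt17.exp_apply_eigenvector {V : Type*} [NormedAddCommGroup V] [InnerProductSpace ℂ V]
    [FiniteDimensional ℂ V] (A : V →L[ℂ] V) (v : V) (μ : ℂ) (h : A v = μ • v) :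
    NormedSpace.exp A v = Complex.exp μ • v := by
  have hpow : ∀ n : ℕ, (A ^ n) v = μ ^ n • v := by
    intro n
    induction n with
    | zero => simp
    | succ n ih =>
        rw [pow_succ, ContinuousLinearMap.mul_apply, h, map_smul, ih, smul_smul, ← pow_succ']
  rw [NormedSpace.exp_eq_tsum (𝕂 := ℂ)]
  have hs : Summable fun n : ℕ => (n.factorial : ℂ)⁻¹ • A ^ n := NormedSpace.expSeries_summable' A
  rw [show (∑' n : ℕ, (n.factorial : ℂ)⁻¹ • A ^ n) v =
      ((ContinuousLinearMap.apply ℂ V v) (∑' n : ℕ, (n.factorial : ℂ)⁻¹ • A ^ n)) from rfl,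
    (ContinuousLinearMap.apply ℂ V v).map_tsum hs]
  simp only [map_smul, ContinuousLinearMap.apply_apply, hpow, smul_smul]
  rw [Summable.tsum_smul_const ?_]
  · congr 1
    rw [Complex.exp_eq_exp_ℂ, NormedSpace.exp_eq_tsum (𝕂 := ℂ)]
    simp [smul_eq_mul]
  · simpa [smul_eq_mul] using NormedSpace.expSeries_summable' (𝕂 := ℂ) μ

/-- Let `β` be a self-adjoint endomorphism of a finite-dimensional complex
inner product space `V`.  A point `[v] ∈ ℙ(V)` satisfies `[exp(tβ)v] = [v]` for all `t ∈ ℝ`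
if and only if `v` is an eigenvector of `β`.  Consequently, if `λ₁, …, λ_k` are the distinct
eigenvalues of `β`, with eigenspaces `V₁, …, V_k`, the fixed-point set of the flow
`([v], t) ↦ [exp(tβ)v]` on `ℙ(V)` is the finite union `ℙ(V₁) ∪ ⋯ ∪ ℙ(V_k)`. -/
theorem stmt_17 {V : Type*} [NormedAddCommGroup V] [InnerProductSpace ℂ V]
    [FiniteDimensional ℂ V] (β : V →L[ℂ] V) (hβ : IsSelfAdjoint β)
    (k : ℕ) (lam : Fin k → ℝ) (hinj : Function.Injective lam)
    (heig : ∀ i, Module.End.HasEigenvalue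
      ((β : V →ₗ[ℂ] V) : Module.End ℂ V) ((lam i : ℝ) : ℂ))
    (hall : ∀ μ : ℂ, Module.End.HasEigenvalue ((β : V →ₗ[ℂ] V) : Module.End ℂ V) μ →
      ∃ i, ((lam i : ℝ) : ℂ) = μ) :
    (∀ (v : V) (hv : v ≠ 0),
      ((∀ t : ℝ, Projectivization.mk ℂ (NormedSpace.exp (t • β) v)
          (stmt17.exp_apply_ne_zero (t • β) v hv) = Projectivization.mk ℂ v hv) ↔
        ∃ μ : ℂ, β v = μ • v)) ∧
    {p : ℙ ℂ V | ∃ (v : V) (hv : v ≠ 0), p = Projectivization.mk ℂ v hv ∧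
        ∀ t : ℝ, Projectivization.mk ℂ (NormedSpace.exp (t • β) v)
          (stmt17.exp_apply_ne_zero (t • β) v hv) = p} =
      ⋃ i, {p : ℙ ℂ V | ∃ (v : V) (hv : v ≠ 0),
        v ∈ Module.End.eigenspace ((β : V →ₗ[ℂ] V) : Module.End ℂ V) ((lam i : ℝ) : ℂ) ∧
        p = Projectivization.mk ℂ v hv} := by
  classical
  have hT : (β : V →ₗ[ℂ] V).IsSymmetric := hβ.isSymmetric
  have hn : Module.finrank ℂ V = Module.finrank ℂ V := rfl
  set b := hT.eigenvectorBasis hn with hbdef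
  set μ := hT.eigenvalues hn with hmudef
  have hb : ∀ i, β (b i) = ((μ i : ℝ) : ℂ) • b i := fun i => hT.apply_eigenvectorBasis hn i
  have hsm : ∀ (t : ℝ) (x : V), t • x = ((t : ℂ)) • x := fun t x => by
    rw [← algebraMap_smul ℂ t x, Complex.coe_algebraMap]
  have key : ∀ (t : ℝ) (i), NormedSpace.exp (t • β) (b i)
      = Complex.exp ((t * μ i : ℝ) : ℂ) • b i := by
    intro t i
    refine stmt17.exp_apply_eigenvector (t • β) (b i) _ ?_
    rw [ContinuousLinearMap.smul_apply, hb i, hsm, smul_smul]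
    push_cast
    ring_nf
  have main : ∀ (v : V) (hv : v ≠ 0),
      ((∀ t : ℝ, Projectivization.mk ℂ (NormedSpace.exp (t • β) v)
          (stmt17.exp_apply_ne_zero (t • β) v hv) = Projectivization.mk ℂ v hv) ↔
        ∃ μ : ℂ, β v = μ • v) := by
    intro v hv
    constructor
    · intro hfix
      set c : Fin (Module.finrank ℂ V) → ℂ := fun i => b.repr v i with hcdef
      have hExp : ∀ t : ℝ, NormedSpace.exp (t • β) v
          = ∑ i, (Complex.exp ((t * μ i : ℝ) : ℂ) * c i) • b i := by
        intro t
        conv_lhs => rw [← b.sum_repr v]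
        rw [map_sum]
        refine Finset.sum_congr rfl fun i _ => ?_
        rw [map_smul, key t i, smul_smul, mul_comm]
      have hcoord : ∀ (t : ℝ) (i), b.repr (NormedSpace.exp (t • β) v) i
          = Complex.exp ((t * μ i : ℝ) : ℂ) * c i := by
        intro t i
        rw [hExp t, map_sum]
        simp only [map_smul, OrthonormalBasis.repr_self]
        rw [WithLp.ofLp_sum, Finset.sum_apply]
        simp [EuclideanSpace.single_apply]
      have hscal : ∀ t : ℝ, ∃ a : ℂˣ, (a : ℂ) • v = NormedSpace.exp (t • β) v := fun t => by
        have := (Projectivization.mk_eq_mk_iff ℂ _ _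
          (stmt17.exp_apply_ne_zero (t • β) v hv) hv).mp (hfix t)
        obtain ⟨a, ha⟩ := this
        exact ⟨a, by rw [← Units.smul_def, ha]⟩
      have heq : ∀ i j, c i ≠ 0 → c j ≠ 0 → μ i = μ j := by
        intro i j hi hj
        obtain ⟨a, ha⟩ := hscal 1
        have hcomp : ∀ k, (a : ℂ) * c k = Complex.exp ((1 * μ k : ℝ) : ℂ) * c k := by
          intro k
          have h1 : (a : ℂ) * c k = b.repr (NormedSpace.exp ((1 : ℝ) • β) v) k := by
            rw [← ha]
            simp only [map_smul]
            rfl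
          rw [hcoord 1 k] at h1
          exact h1
        have hai : (a : ℂ) = Complex.exp ((1 * μ i : ℝ) : ℂ) :=
          mul_right_cancel₀ hi (hcomp i)
        have haj : (a : ℂ) = Complex.exp ((1 * μ j : ℝ) : ℂ) :=
          mul_right_cancel₀ hj (hcomp j)
        have hee : Complex.exp ((μ i : ℝ) : ℂ) = Complex.exp ((μ j : ℝ) : ℂ) := by
          have := hai.symm.trans haj
          simpa using this
        rw [← Complex.ofReal_exp, ← Complex.ofReal_exp] at hee
        exact Real.exp_injective (by exact_mod_cast hee)
      have hrv : ∃ i, c i ≠ 0 := by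
        by_contra h
        push_neg at h
        apply hv
        have : b.repr v = 0 := by
          ext i
          simpa using h i
        have := congrArg b.repr.symm this
        simpa using this
      obtain ⟨i₀, hi₀⟩ := hrv
      refine ⟨((μ i₀ : ℝ) : ℂ), ?_⟩
      have hv' := b.sum_repr v
      calc β v = β (∑ i, c i • b i) := by rw [hv']
        _ = ∑ i, c i • β (b i) := by rw [map_sum]; exact Finset.sum_congr rfl fun i _ => map_smul β _ _
        _ = ∑ i, c i • (((μ i₀ : ℝ) : ℂ) • b i) := by
            refine Finset.sum_congr rfl fun i _ => ?_
            by_cases hci : c i = 0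
            · simp [hci]
            · rw [hb i, heq i i₀ hci hi₀]
        _ = ((μ i₀ : ℝ) : ℂ) • v := by
            rw [← hv', Finset.smul_sum]
            exact Finset.sum_congr rfl fun i _ => (smul_comm _ _ _)
    · rintro ⟨μ', hμ'⟩ t
      rw [Projectivization.mk_eq_mk_iff]
      refine ⟨Units.mk0 (Complex.exp ((t : ℂ) * μ')) (Complex.exp_ne_zero _), ?_⟩
      have hexp : NormedSpace.exp (t • β) v = Complex.exp ((t : ℂ) * μ') • v := by
        refine stmt17.exp_apply_eigenvector (t • β) v _ ?_
        rw [ContinuousLinearMap.smul_apply, hμ', hsm, smul_smul]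
      rw [hexp, Units.smul_def, Units.val_mk0]
  refine ⟨main, ?_⟩
  ext p
  simp only [Set.mem_setOf_eq, Set.mem_iUnion]
  constructor
  · rintro ⟨v, hv, rfl, hfix⟩
    obtain ⟨μ', hμ'⟩ := (main v hv).mp hfix
    have hev : Module.End.HasEigenvalue ((β : V →ₗ[ℂ] V) : Module.End ℂ V) μ' :=
      Module.End.hasEigenvalue_of_hasEigenvector
        ⟨Module.End.mem_eigenspace_iff.mpr (by simpa using hμ'), hv⟩
    obtain ⟨i, hi⟩ := hall μ' hev
    exact ⟨i, v, hv, Module.End.mem_eigenspace_iff.mpr (by rw [hi]; simpa using hμ'), rfl⟩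
  · rintro ⟨i, v, hv, hmem, rfl⟩
    have hμv : β v = ((lam i : ℝ) : ℂ) • v := by
      simpa using Module.End.mem_eigenspace_iff.mp hmem
    exact ⟨v, hv, rfl, (main v hv).mpr ⟨_, hμv⟩⟩
end
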